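/- (Theorem 1, prediction-error scalars) If R is an N×N Hermitian positive definite matrix that is block Toeplitz with block size n1, then for all 0 ≤ k ≤ l ≤ N−1: v_{k,l} = v_{k mod n1, l − (k sec n1)} and v'_{k,l} = v'_{k mod n1, l − (k sec n1)}. -/
import Mathlib


open Matrix
open scoped ComplexOrder

noncomputable section

/-- The `k`-th standard basis vector of `ℂⁿ` (zero if `k ≥ n`). -/
def eVec (n : ℕ) (k : ℕ) : Fin n → ℂ := fun j => if (j : ℕ) = k then 1 else 0

/-- `vᵀ R w`. -/
def bform {n : ℕ} (R : Matrix (Fin n) (Fin n) ℂ) (v w : Fin n → ℂ) : ℂ :=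
  v ⬝ᵥ R.mulVec w

/-- Joint recursion computing the pair `(p_{k,k+d}, q_{k,k+d})`. -/
def pqAux {n : ℕ} (R : Matrix (Fin n) (Fin n) ℂ) : ℕ → ℕ → (Fin n → ℂ) × (Fin n → ℂ)
  | 0, k => (eVec n k, eVec n k)
  | d + 1, k =>
      let p := (pqAux R d k).1
      let q := (pqAux R d (k + 1)).2
      let l := k + d + 1
      let a := bform R p (eVec n l) / bform R q (eVec n l)
      let a' := bform R q (eVec n k) / bform R p (eVec n k)
      (p - a • q, q - a' • p)

/-- The orthogonal polynomial `p_{k,l}`. -/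
def pVec {n : ℕ} (R : Matrix (Fin n) (Fin n) ℂ) (k l : ℕ) : Fin n → ℂ :=
  (pqAux R (l - k) k).1

/-- The orthogonal polynomial `q_{k,l}`. -/
def qVec {n : ℕ} (R : Matrix (Fin n) (Fin n) ℂ) (k l : ℕ) : Fin n → ℂ :=
  (pqAux R (l - k) k).2

/-- The generalized reflection coefficient `a_{k,l}`. -/
def aCoef {n : ℕ} (R : Matrix (Fin n) (Fin n) ℂ) (k l : ℕ) : ℂ :=
  bform R (pVec R k (l - 1)) (eVec n l) / bform R (qVec R (k + 1) l) (eVec n l)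

/-- The generalized reflection coefficient `a'_{k,l}`. -/
def aCoef' {n : ℕ} (R : Matrix (Fin n) (Fin n) ℂ) (k l : ℕ) : ℂ :=
  bform R (qVec R (k + 1) l) (eVec n k) / bform R (pVec R k (l - 1)) (eVec n k)

/-- `v_{k,l} = q_{k,l}ᵀ R e_l`. -/
def vSc {n : ℕ} (R : Matrix (Fin n) (Fin n) ℂ) (k l : ℕ) : ℂ :=
  bform R (qVec R k l) (eVec n l)

/-- `v'_{k,l} = p_{k,l}ᵀ R e_k`. -/
def vSc' {n : ℕ} (R : Matrix (Fin n) (Fin n) ℂ) (k l : ℕ) : ℂ :=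
  bform R (pVec R k l) (eVec n k)

namespace Stmt13Aux

/-- Shift of a vector by `n1` positions (filling with zeros). -/
def shf (n1 : ℕ) {N : ℕ} (v : Fin N → ℂ) : Fin N → ℂ :=
  fun j => if h : n1 ≤ (j : ℕ) then
    v ⟨(j : ℕ) - n1, lt_of_le_of_lt (Nat.sub_le _ _) j.isLt⟩ else 0

lemma shf_eVec (n1 N k : ℕ) : shf n1 (eVec N k) = eVec N (k + n1) := by
  funext j
  simp only [shf, eVec]
  by_cases h : n1 ≤ (j : ℕ)
  · rw [dif_pos h]
    by_cases h2 : (j : ℕ) - n1 = k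
    · rw [if_pos h2, if_pos (by omega)]
    · rw [if_neg h2, if_neg (by omega)]
  · rw [dif_neg h, if_neg (by omega)]

lemma shf_sub_smul (n1 : ℕ) {N : ℕ} (v w : Fin N → ℂ) (a : ℂ) :
    shf n1 (v - a • w) = shf n1 v - a • shf n1 w := by
  funext j
  simp only [shf, Pi.sub_apply, Pi.smul_apply, smul_eq_mul]
  split
  · rfl
  · simp

lemma sum_shf {N : ℕ} (n1 : ℕ) (v : Fin N → ℂ)
    (hv : ∀ i : Fin N, v i ≠ 0 → (i : ℕ) + n1 < N) (f : ℕ → ℂ) :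
    ∑ i : Fin N, shf n1 v i * f (i : ℕ) = ∑ i : Fin N, v i * f ((i : ℕ) + n1) := by
  classical
  set V : ℕ → ℂ := fun i => if h : i < N then v ⟨i, h⟩ else 0 with hV
  set g : ℕ → ℂ := fun i => (if n1 ≤ i then V (i - n1) else 0) * f i with hg
  have hVz : ∀ m, N ≤ m + n1 → V m = 0 := by
    intro m hm
    simp only [hV]
    split
    · next h =>
      by_contra hne
      have hlt := hv ⟨m, h⟩ hne
      simp only [Fin.val_mk] at hlt
      omega
    · rfl
  have h1 : ∑ i : Fin N, shf n1 v i * f (i : ℕ) = ∑ i ∈ Finset.range N, g i := by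
    rw [← Fin.sum_univ_eq_sum_range]
    refine Finset.sum_congr rfl fun i _ => ?_
    simp only [hg, shf, hV]
    congr 1
    split
    · rw [dif_pos (by omega)]
    · rfl
  have h2 : ∑ i ∈ Finset.range (N + n1), g i = ∑ i ∈ Finset.range N, g i := by
    rw [Finset.sum_range_add]
    have : ∀ x ∈ Finset.range n1, g (N + x) = 0 := by
      intro x _
      simp only [hg]
      by_cases h : n1 ≤ N + x
      · rw [if_pos h, hVz _ (by omega), zero_mul]
      · rw [if_neg h, zero_mul]
    rw [Finset.sum_congr rfl this, Finset.sum_const_zero, add_zero]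
  have h3 : ∑ i ∈ Finset.range (n1 + N), g i
      = ∑ i ∈ Finset.range N, V i * f (n1 + i) := by
    rw [Finset.sum_range_add]
    have hz : ∀ x ∈ Finset.range n1, g x = 0 := by
      intro x hx
      simp only [Finset.mem_range] at hx
      simp only [hg]
      rw [if_neg (by omega), zero_mul]
    rw [Finset.sum_congr rfl hz, Finset.sum_const_zero, zero_add]
    refine Finset.sum_congr rfl fun x _ => ?_
    simp only [hg]
    rw [if_pos (by omega)]
    congr 2
    omega
  have h4 : ∑ i ∈ Finset.range N, V i * f (n1 + i)
      = ∑ i : Fin N, v i * f ((i : ℕ) + n1) := by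
    rw [← Fin.sum_univ_eq_sum_range (fun i => V i * f (n1 + i))]
    refine Finset.sum_congr rfl fun i _ => ?_
    simp only [hV]
    rw [dif_pos i.isLt, Nat.add_comm n1]
  rw [h1, ← h2]
  rw [show N + n1 = n1 + N by omega, h3, h4]

lemma bform_shf {N n1 : ℕ} (R : Matrix (Fin N) (Fin N) ℂ)
    (hBT : ∀ (i j : ℕ) (hi : i + n1 < N) (hj : j + n1 < N),
      R ⟨i + n1, hi⟩ ⟨j + n1, hj⟩ =
        R ⟨i, Nat.lt_of_le_of_lt (Nat.le_add_right i n1) hi⟩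
          ⟨j, Nat.lt_of_le_of_lt (Nat.le_add_right j n1) hj⟩)
    (v w : Fin N → ℂ)
    (hv : ∀ i : Fin N, v i ≠ 0 → (i : ℕ) + n1 < N)
    (hw : ∀ i : Fin N, w i ≠ 0 → (i : ℕ) + n1 < N) :
    bform R (shf n1 v) (shf n1 w) = bform R v w := by
  classical
  set Re : ℕ → ℕ → ℂ := fun i j => if h : i < N ∧ j < N then R ⟨i, h.1⟩ ⟨j, h.2⟩ else 0 with hRe
  have hReR : ∀ i j : Fin N, Re (i : ℕ) (j : ℕ) = R i j := by
    intro i j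
    simp only [hRe]
    rw [dif_pos ⟨i.isLt, j.isLt⟩]
  have e1 : bform R (shf n1 v) (shf n1 w)
      = ∑ i : Fin N, shf n1 v i * (fun m => ∑ j : Fin N, shf n1 w j * Re m (j : ℕ)) (i : ℕ) := by
    simp only [bform, mulVec, dotProduct]
    refine Finset.sum_congr rfl fun i _ => ?_
    congr 1
    refine Finset.sum_congr rfl fun j _ => ?_
    rw [hReR, mul_comm]
  rw [e1, sum_shf n1 v hv (fun m => ∑ j : Fin N, shf n1 w j * Re m (j : ℕ))]
  have e2 : ∀ i : Fin N, (fun m => ∑ j : Fin N, shf n1 w j * Re m (j : ℕ)) ((i : ℕ) + n1)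
      = ∑ j : Fin N, w j * Re ((i : ℕ) + n1) ((j : ℕ) + n1) := by
    intro i
    exact sum_shf n1 w hw (fun m => Re ((i : ℕ) + n1) m)
  simp only [e2]
  simp only [bform, mulVec, dotProduct]
  refine Finset.sum_congr rfl fun i _ => ?_
  by_cases hvi : v i = 0
  · rw [hvi, zero_mul, zero_mul]
  · have hi : (i : ℕ) + n1 < N := hv i hvi
    congr 1
    refine Finset.sum_congr rfl fun j _ => ?_
    by_cases hwj : w j = 0
    · rw [hwj, zero_mul, mul_zero]
    · have hj : (j : ℕ) + n1 < N := hw j hwj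
      have : Re ((i : ℕ) + n1) ((j : ℕ) + n1) = R i j := by
        simp only [hRe]
        rw [dif_pos ⟨hi, hj⟩]
        have := hBT (i : ℕ) (j : ℕ) hi hj
        rw [this]
      rw [this, mul_comm]

lemma pqAux_succ {N : ℕ} (R : Matrix (Fin N) (Fin N) ℂ) (d k : ℕ) :
    pqAux R (d + 1) k =
      ((pqAux R d k).1 -
          (bform R (pqAux R d k).1 (eVec N (k + d + 1)) /
            bform R (pqAux R d (k + 1)).2 (eVec N (k + d + 1))) • (pqAux R d (k + 1)).2,
        (pqAux R d (k + 1)).2 -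
          (bform R (pqAux R d (k + 1)).2 (eVec N k) /
            bform R (pqAux R d k).1 (eVec N k)) • (pqAux R d k).1) := rfl

lemma pqAux_supp {N : ℕ} (R : Matrix (Fin N) (Fin N) ℂ) (d : ℕ) :
    ∀ k (i : Fin N), ((pqAux R d k).1 i ≠ 0 → (i : ℕ) ≤ k + d)
      ∧ ((pqAux R d k).2 i ≠ 0 → (i : ℕ) ≤ k + d) := by
  induction d with
  | zero =>
    intro k i
    constructor <;>
    · intro h
      simp only [pqAux, eVec] at h
      by_cases hik : (i : ℕ) = k
      · omega
      · simp [hik] at h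
  | succ d ih =>
    intro k i
    have hp := (ih k i).1
    have hq := (ih (k + 1) i).2
    constructor
    · intro h
      by_contra hlt
      have h1 : (pqAux R d k).1 i = 0 := by
        by_contra hc; exact hlt (by have := hp hc; omega)
      have h2 : (pqAux R d (k + 1)).2 i = 0 := by
        by_contra hc; exact hlt (by have := hq hc; omega)
      apply h
      rw [pqAux_succ]
      simp [h1, h2]
    · intro h
      by_contra hlt
      have h1 : (pqAux R d k).1 i = 0 := by
        by_contra hc; exact hlt (by have := hp hc; omega)
      have h2 : (pqAux R d (k + 1)).2 i = 0 := by
        by_contra hc; exact hlt (by have := hq hc; omega)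
      apply h
      rw [pqAux_succ]
      simp [h1, h2]

lemma eVec_supp {N n1 : ℕ} (m : ℕ) (hm : m + n1 < N) :
    ∀ i : Fin N, eVec N m i ≠ 0 → (i : ℕ) + n1 < N := by
  intro i hi
  simp only [eVec] at hi
  by_cases h : (i : ℕ) = m
  · omega
  · simp [h] at hi

lemma pqAux_shf {N n1 : ℕ} (R : Matrix (Fin N) (Fin N) ℂ)
    (hBT : ∀ (i j : ℕ) (hi : i + n1 < N) (hj : j + n1 < N),
      R ⟨i + n1, hi⟩ ⟨j + n1, hj⟩ =
        R ⟨i, Nat.lt_of_le_of_lt (Nat.le_add_right i n1) hi⟩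
          ⟨j, Nat.lt_of_le_of_lt (Nat.le_add_right j n1) hj⟩)
    (d : ℕ) :
    ∀ k, k + d + n1 < N →
      pqAux R d (k + n1) = (shf n1 (pqAux R d k).1, shf n1 (pqAux R d k).2) := by
  induction d with
  | zero =>
    intro k hk
    simp only [pqAux]
    rw [shf_eVec]
  | succ d ih =>
    intro k hk
    have hp := ih k (by omega)
    have hq := ih (k + 1) (by omega)
    have hsp : ∀ i : Fin N, (pqAux R d k).1 i ≠ 0 → (i : ℕ) + n1 < N := fun i hi => by
      have := (pqAux_supp R d k i).1 hi; omega
    have hsq : ∀ i : Fin N, (pqAux R d (k + 1)).2 i ≠ 0 → (i : ℕ) + n1 < N := fun i hi => by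
      have := (pqAux_supp R d (k + 1) i).2 hi; omega
    have hek : ∀ i : Fin N, eVec N k i ≠ 0 → (i : ℕ) + n1 < N :=
      eVec_supp k (by omega)
    have hel : ∀ i : Fin N, eVec N (k + d + 1) i ≠ 0 → (i : ℕ) + n1 < N :=
      eVec_supp (k + d + 1) (by omega)
    rw [pqAux_succ, pqAux_succ]
    have hidx1 : k + n1 + 1 = k + 1 + n1 := by omega
    have hidx2 : k + n1 + d + 1 = k + d + 1 + n1 := by omega
    rw [hidx1, hidx2, hp, hq, ← shf_eVec n1 N (k + d + 1), ← shf_eVec n1 N k]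
    rw [bform_shf R hBT _ _ hsp hel, bform_shf R hBT _ _ hsq hel,
      bform_shf R hBT _ _ hsq hek, bform_shf R hBT _ _ hsp hek]
    rw [← shf_sub_smul, ← shf_sub_smul]

lemma vSc_shf {N n1 : ℕ} (R : Matrix (Fin N) (Fin N) ℂ)
    (hBT : ∀ (i j : ℕ) (hi : i + n1 < N) (hj : j + n1 < N),
      R ⟨i + n1, hi⟩ ⟨j + n1, hj⟩ =
        R ⟨i, Nat.lt_of_le_of_lt (Nat.le_add_right i n1) hi⟩
          ⟨j, Nat.lt_of_le_of_lt (Nat.le_add_right j n1) hj⟩)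
    (k l : ℕ) (hkl : k + n1 ≤ l) (hl : l < N) :
    vSc R (k + n1) l = vSc R k (l - n1) ∧ vSc' R (k + n1) l = vSc' R k (l - n1) := by
  obtain ⟨d, rfl⟩ : ∃ d, l = k + n1 + d := ⟨l - (k + n1), by omega⟩
  have h1 : k + n1 + d - n1 = k + d := by omega
  have h2 : k + n1 + d - (k + n1) = d := by omega
  have h3 : k + d - k = d := by omega
  have hshift := pqAux_shf R hBT d k (by omega)
  have hshift1 : (pqAux R d (k + n1)).1 = shf n1 (pqAux R d k).1 := by rw [hshift]
  have hshift2 : (pqAux R d (k + n1)).2 = shf n1 (pqAux R d k).2 := by rw [hshift]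
  have hqsupp : ∀ i : Fin N, (pqAux R d k).2 i ≠ 0 → (i : ℕ) + n1 < N := fun i hi => by
    have := (pqAux_supp R d k i).2 hi; omega
  have hpsupp : ∀ i : Fin N, (pqAux R d k).1 i ≠ 0 → (i : ℕ) + n1 < N := fun i hi => by
    have := (pqAux_supp R d k i).1 hi; omega
  have hek : ∀ i : Fin N, eVec N k i ≠ 0 → (i : ℕ) + n1 < N := eVec_supp k (by omega)
  have hel : ∀ i : Fin N, eVec N (k + d) i ≠ 0 → (i : ℕ) + n1 < N :=
    eVec_supp (k + d) (by omega)
  have heVl : eVec N (k + n1 + d) = shf n1 (eVec N (k + d)) := by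
    rw [shf_eVec, show k + d + n1 = k + n1 + d from by omega]
  have heVk : eVec N (k + n1) = shf n1 (eVec N k) := (shf_eVec n1 N k).symm
  rw [h1]
  constructor
  · simp only [vSc, qVec, h2, h3]
    rw [hshift2, heVl, bform_shf R hBT _ _ hqsupp hel]
  · simp only [vSc', pVec, h2, h3]
    rw [hshift1, heVk, bform_shf R hBT _ _ hpsupp hek]

end Stmt13Aux

open Stmt13Aux in
/-- Theorem 1 (prediction-error scalars): for a Hermitian positive definite block-Toeplitz
matrix with block size `n1`, `v_{k,l} = v_{k mod n1, l - (k sec n1)}` and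
`v'_{k,l} = v'_{k mod n1, l - (k sec n1)}`, where `k sec n1 = n1 * (k / n1)`. -/
theorem stmt13 (n1 n2 : ℕ) (h1 : 1 ≤ n1) (h2 : 1 ≤ n2)
    (R : Matrix (Fin (n1 * n2)) (Fin (n1 * n2)) ℂ) (hR : R.PosDef)
    (hBT : ∀ (i j : ℕ) (hi : i + n1 < n1 * n2) (hj : j + n1 < n1 * n2),
      R ⟨i + n1, hi⟩ ⟨j + n1, hj⟩ =
        R ⟨i, Nat.lt_of_le_of_lt (Nat.le_add_right i n1) hi⟩
          ⟨j, Nat.lt_of_le_of_lt (Nat.le_add_right j n1) hj⟩) :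
    ∀ k l : ℕ, k ≤ l → l ≤ n1 * n2 - 1 →
      vSc R k l = vSc R (k % n1) (l - n1 * (k / n1)) ∧
      vSc' R k l = vSc' R (k % n1) (l - n1 * (k / n1)) := by
  have hN : 1 ≤ n1 * n2 := Nat.mul_pos h1 h2
  intro k
  induction k using Nat.strong_induction_on with
  | _ k ih =>
    intro l hkl hl
    by_cases hk : k < n1
    · rw [Nat.mod_eq_of_lt hk, Nat.div_eq_of_lt hk, Nat.mul_zero, Nat.sub_zero]
      exact ⟨rfl, rfl⟩
    · push_neg at hk
      have hstep := vSc_shf R hBT (k - n1) l (by omega) (by omega)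
      rw [show k - n1 + n1 = k by omega] at hstep
      have hih := ih (k - n1) (by omega) (l - n1) (by omega) (by omega)
      have hmod : k % n1 = (k - n1) % n1 := Nat.mod_eq_sub_mod hk
      have hdiv : k / n1 = (k - n1) / n1 + 1 := Nat.div_eq_sub_div h1 hk
      have harith : l - n1 * (k / n1) = l - n1 - n1 * ((k - n1) / n1) := by
        rw [hdiv, Nat.mul_succ]
        omega
      rw [hmod, harith]
      exact ⟨hstep.1.trans hih.1, hstep.2.trans hih.2⟩
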